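/- (Discontinuous velocity / totally disconnected set of change) Let 0 < β < 1 and suppose υ⁺_β f exists finitely on an interval around x with υ⁺_β f(x) = K ≠ 0, and suppose υ⁺_β f is continuous at x. Then a contradiction follows; in particular the set χ⁺_β(f) = {x : υ⁺_β f(x) ≠ 0} contains no interval (is totally disconnected) whenever υ⁺_β f exists everywhere on an interval. -/

import Mathlib

open Filter Topology Set

set_option maxHeartbeats 1000000 in
lemma aux_discvel (f : ℝ → ℝ) (x β K : ℝ) (v : ℝ → ℝ)
    (hβ : 0 < β) (hβ1 : β < 1)
    (hvel : ∃ δ > (0:ℝ), ∀ y ∈ Ioo (x - δ) (x + δ),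
      Tendsto (fun ε : ℝ => (f (y + ε) - f y) / ε ^ β) (𝓝[>] 0) (𝓝 (v y)))
    (hK : v x = K) (hKpos : 0 < K)
    (hcont : ContinuousAt v x) : False := by
  obtain ⟨δ, hδ, hvel⟩ := hvel
  have hV : ∀ᶠ y in 𝓝 x, v y ∈ Ioo (K/2) (3*K/2) := by
    have : Ioo (K/2) (3*K/2) ∈ 𝓝 (v x) := by
      rw [hK]; exact Ioo_mem_nhds (by linarith) (by linarith)
    exact hcont this
  rw [Metric.eventually_nhds_iff] at hV
  obtain ⟨δ₂, hδ₂, hV⟩ := hV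
  set a : ℝ := x + min δ δ₂ / 4 with ha_def
  set b : ℝ := x + min δ δ₂ / 2 with hb_def
  have hmin : 0 < min δ δ₂ := lt_min hδ hδ₂
  have hab : a < b := by simp only [ha_def, hb_def]; linarith
  have hmem : ∀ y ∈ Icc a b, y ∈ Ioo (x - δ) (x + δ) ∧ dist y x < δ₂ := by
    intro y hy
    obtain ⟨hy1, hy2⟩ := hy
    have h1 : min δ δ₂ ≤ δ := min_le_left _ _
    have h2 : min δ δ₂ ≤ δ₂ := min_le_right _ _
    constructor
    · constructor
      · simp only [ha_def] at hy1; linarith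
      · simp only [hb_def] at hy2; linarith
    · rw [Real.dist_eq, abs_lt]
      constructor
      · simp only [ha_def] at hy1; linarith
      · simp only [hb_def] at hy2; linarith
  set E : ℕ → Set ℝ := fun n => {y | y ∈ Icc a b ∧ ∀ ε : ℝ, 0 < ε → ε ≤ 1/(n+1) →
      K/4 * ε ^ β ≤ f (y+ε) - f y ∧ f (y+ε) - f y ≤ 2*K * ε ^ β} with hE_def
  have hcover : ∀ y ∈ Icc a b, ∃ n : ℕ, y ∈ E n := by
    intro y hy
    obtain ⟨hyIoo, hydist⟩ := hmem y hy
    have hvy : v y ∈ Ioo (K/2) (3*K/2) := hV hydist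
    have hIoo : Ioo (K/4) (2*K) ∈ 𝓝 (v y) :=
      Ioo_mem_nhds (by have := hvy.1; linarith) (by have := hvy.2; linarith)
    have hev := (hvel y hyIoo).eventually hIoo
    rw [eventually_nhdsWithin_iff, Metric.eventually_nhds_iff] at hev
    obtain ⟨ζ, hζ, hev⟩ := hev
    obtain ⟨n, hn⟩ := exists_nat_one_div_lt hζ
    refine ⟨n, hy, fun ε hε hε' => ?_⟩
    have hd : dist ε 0 < ζ := by
      rw [Real.dist_eq, sub_zero, abs_of_pos hε]
      calc ε ≤ 1/(n+1) := hε'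
        _ < ζ := by exact_mod_cast hn
    have := hev hd (mem_Ioi.mpr hε)
    have hεβ : (0:ℝ) < ε ^ β := Real.rpow_pos_of_pos hε β
    obtain ⟨hl, hr⟩ := this
    constructor
    · have := (lt_div_iff₀ hεβ).mp hl
      linarith
    · have := (div_lt_iff₀ hεβ).mp hr
      linarith
  -- Baire category
  haveI : CompleteSpace (Icc a b) := isClosed_Icc.completeSpace_coe
  haveI : Nonempty (Icc a b) := ⟨⟨a, left_mem_Icc.mpr hab.le⟩⟩
  obtain ⟨n, hn⟩ := nonempty_interior_of_iUnion_of_closed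
    (f := fun n : ℕ => (Subtype.val : Icc a b → ℝ) ⁻¹' closure (E n))
    (fun n => isClosed_closure.preimage continuous_subtype_val)
    (by
      ext z
      simp only [mem_iUnion, mem_preimage, mem_univ, iff_true]
      obtain ⟨m, hm⟩ := hcover z z.2
      exact ⟨m, subset_closure hm⟩)
  obtain ⟨z₀, hz₀⟩ := hn
  rw [mem_interior_iff_mem_nhds, Metric.mem_nhds_iff] at hz₀
  obtain ⟨η, hη, hball⟩ := hz₀
  set z : ℝ := (z₀ : ℝ) with hz_def
  have hzab : z ∈ Icc a b := z₀.2
  set η' : ℝ := min (η/2) (1/(2*(n+1))) with hη'_def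
  have hη'pos : 0 < η' := lt_min (by linarith) (by positivity)
  set c : ℝ := max a (z - η') with hc_def
  set d : ℝ := min b (z + η') with hd_def
  have hcd : c < d := by
    rw [hc_def, hd_def]
    apply max_lt <;> [skip; skip] <;> apply lt_min
    · exact hab
    · linarith [hzab.1]
    · linarith [hzab.2]
    · linarith
  have hsub : Ioo c d ⊆ closure (E n) := by
    intro w hw
    have hwa : a ≤ w := le_of_lt (lt_of_le_of_lt (le_max_left _ _) hw.1)
    have hwb : w ≤ b := le_of_lt (lt_of_lt_of_le hw.2 (min_le_left _ _))
    have hwz : dist w z < η := by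
      rw [Real.dist_eq, abs_lt]
      have h1 : z - η' < w := lt_of_le_of_lt (le_max_right _ _) hw.1
      have h2 : w < z + η' := lt_of_lt_of_le hw.2 (min_le_right _ _)
      have : η' ≤ η/2 := min_le_left _ _
      constructor <;> linarith
    have : (⟨w, hwa, hwb⟩ : Icc a b) ∈ Metric.ball z₀ η := by
      rw [Metric.mem_ball, Subtype.dist_eq]
      exact hwz
    exact hball this
  have hL1 : d - c ≤ 1/(n+1) := by
    have h1 : z - η' ≤ c := le_max_right _ _
    have h2 : d ≤ z + η' := min_le_right _ _
    have h4 : η' ≤ 1/(2*((n:ℝ)+1)) := min_le_right _ _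
    have h5 : 1/(2*((n:ℝ)+1)) = (1/((n:ℝ)+1))/2 := by
      have : ((n:ℝ)+1) ≠ 0 := by positivity
      field_simp
    rw [h5] at h4
    linarith
  have hdense : ∀ u w : ℝ, c ≤ u → u < w → w ≤ d → ∃ p ∈ E n, u < p ∧ p < w := by
    intro u w hu huw hw
    by_contra hcon
    push_neg at hcon
    have hcl : closure (E n) ⊆ (Ioo u w)ᶜ := by
      apply closure_minimal _ isOpen_Ioo.isClosed_compl
      intro p hp hpm
      exact absurd (hcon p hp hpm.1) (not_le.mpr hpm.2)
    have hq : (u+w)/2 ∈ Ioo c d := ⟨by linarith, by linarith⟩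
    exact (hcl (hsub hq)) ⟨by linarith, by linarith⟩
  -- choose N large
  obtain ⟨T, hT24, hT2⟩ : ∃ T : ℝ, 24 < T ^ (1-β) ∧ 2 ≤ T := by
    have h1β : (0:ℝ) < 1 - β := by linarith
    exact (((tendsto_rpow_atTop h1β).eventually_gt_atTop 24).and
      (eventually_ge_atTop (2:ℝ))).exists
  obtain ⟨N, hN2', hN24⟩ : ∃ N : ℕ, 2 ≤ N ∧ 24 < (N:ℝ) ^ (1-β) := by
    refine ⟨⌈T⌉₊, ?_, ?_⟩
    · have hTN : T ≤ (⌈T⌉₊:ℝ) := Nat.le_ceil T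
      have : (2:ℝ) ≤ (⌈T⌉₊:ℝ) := le_trans hT2 hTN
      exact_mod_cast this
    · have hTN : T ≤ (⌈T⌉₊:ℝ) := Nat.le_ceil T
      exact lt_of_lt_of_le hT24 (Real.rpow_le_rpow (by linarith) hTN (by linarith))
  have hN2 : (2:ℝ) ≤ (N:ℝ) := by exact_mod_cast hN2'
  have hNpos : (0:ℝ) < (N:ℝ) := by linarith
  set L : ℝ := d - c with hL_def
  have hL0 : 0 < L := by rw [hL_def]; linarith
  set Δ : ℝ := L / N with hΔ_def
  have hΔ0 : 0 < Δ := div_pos hL0 hNpos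
  have hNΔ : (N:ℝ) * Δ = L := by
    rw [hΔ_def]; field_simp
  clear_value L Δ
  -- choose chain points p i ∈ E n ∩ (c + iΔ, c + iΔ + Δ/3)
  have hchoice : ∀ i : ℕ, ∃ q : ℝ, i < N →
      q ∈ E n ∧ c + i*Δ < q ∧ q < c + i*Δ + Δ/3 := by
    intro i
    by_cases hi : i < N
    · have hiR : (i:ℝ) + 1 ≤ (N:ℝ) := by exact_mod_cast hi
      obtain ⟨q, hqE, hq1, hq2⟩ := hdense (c + i*Δ) (c + i*Δ + Δ/3)
        (by nlinarith [Nat.cast_nonneg (α := ℝ) i]) (by linarith)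
        (by
          have : (i:ℝ)*Δ + Δ/3 ≤ (N:ℝ)*Δ := by nlinarith
          rw [hNΔ] at this
          rw [hL_def] at this
          linarith)
      exact ⟨q, fun _ => ⟨hqE, hq1, hq2⟩⟩
    · exact ⟨0, fun h => absurd h hi⟩
  choose p hp using hchoice
  -- gaps between consecutive points
  have hgap : ∀ i : ℕ, i + 1 < N →
      2*Δ/3 < p (i+1) - p i ∧ p (i+1) - p i < 4*Δ/3 := by
    intro i hi
    obtain ⟨_, h1, h2⟩ := hp i (by omega)
    obtain ⟨_, h3, h4⟩ := hp (i+1) hi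
    have hc1 : c + ((i+1:ℕ) : ℝ) * Δ = c + (i:ℝ)*Δ + Δ := by push_cast; ring
    rw [hc1] at h3 h4
    constructor
    · linarith
    · linarith
  have hgapsmall : Δ * 4 / 3 ≤ 1/(n+1) := by
    have h2Δ : 2 * Δ ≤ (N:ℝ) * Δ := mul_le_mul_of_nonneg_right hN2 hΔ0.le
    linarith [hNΔ, hL1]
  -- per-step lower bound
  have hstep : ∀ i : ℕ, i + 1 < N →
      K/4 * (2*Δ/3) ^ β ≤ f (p (i+1)) - f (p i) := by
    intro i hi
    obtain ⟨hpE, _, _⟩ := hp i (by omega)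
    obtain ⟨hg1, hg2⟩ := hgap i hi
    have hg0 : (0:ℝ) < p (i+1) - p i := lt_trans (by positivity) hg1
    have hgle : p (i+1) - p i ≤ 1/(n+1) := by linarith
    have hlow := (hpE.2 _ hg0 hgle).1
    have hpg : p i + (p (i+1) - p i) = p (i+1) := by ring
    rw [hpg] at hlow
    have hmono : (2*Δ/3) ^ β ≤ (p (i+1) - p i) ^ β :=
      Real.rpow_le_rpow (by positivity) hg1.le hβ.le
    have hmul : K/4 * (2*Δ/3) ^ β ≤ K/4 * (p (i+1) - p i) ^ β :=
      mul_le_mul_of_nonneg_left hmono (by linarith)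
    linarith
  -- sum over the chain
  have hsum : ((N-1 : ℕ):ℝ) * (K/4 * (2*Δ/3) ^ β) ≤ f (p (N-1)) - f (p 0) := by
    rw [← Finset.sum_range_sub (fun i => f (p i)) (N-1)]
    have := Finset.card_nsmul_le_sum (Finset.range (N-1))
      (fun i => f (p (i+1)) - f (p i)) (K/4 * (2*Δ/3) ^ β)
      (fun i hi => hstep i (by
        have := Finset.mem_range.mp hi; omega))
    simpa [Finset.card_range, nsmul_eq_mul] using this
  -- global upper bound
  have hupper : f (p (N-1)) - f (p 0) ≤ 2*K * L ^ β := by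
    obtain ⟨hp0E, h01, h02⟩ := hp 0 (by omega)
    obtain ⟨_, hN1, hN2''⟩ := hp (N-1) (by omega)
    have hcastN1 : ((N-1:ℕ):ℝ) = (N:ℝ) - 1 := by
      push_cast [Nat.cast_sub (by omega : 1 ≤ N)]; ring
    set e : ℝ := p (N-1) - p 0 with he_def
    have he0 : 0 < e := by
      rw [he_def]
      have : c + ((N-1:ℕ):ℝ)*Δ < p (N-1) := hN1
      rw [hcastN1] at this
      push_cast at h02
      nlinarith
    have heL : e ≤ L := by
      rw [he_def]
      have : p (N-1) < c + ((N-1:ℕ):ℝ)*Δ + Δ/3 := hN2''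
      rw [hcastN1] at this
      push_cast at h01
      nlinarith [hNΔ, hL_def, hcd]
    have hele : e ≤ 1/(n+1) := le_trans heL hL1
    have := (hp0E.2 e he0 hele).2
    have hpe : p 0 + e = p (N-1) := by rw [he_def]; ring
    rw [hpe] at this
    calc f (p (N-1)) - f (p 0) ≤ 2*K * e ^ β := this
      _ ≤ 2*K * L ^ β := by
          apply mul_le_mul_of_nonneg_left _ (by linarith)
          exact Real.rpow_le_rpow he0.le heL hβ.le
  -- final contradiction
  have hkey : ((N-1 : ℕ):ℝ) * (K/4 * (2*Δ/3) ^ β) ≤ 2*K * L ^ β := le_trans hsum hupper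
  have hcastN1 : ((N-1:ℕ):ℝ) = (N:ℝ) - 1 := by
    push_cast [Nat.cast_sub (by omega : 1 ≤ N)]; ring
  rw [hcastN1] at hkey
  have hΔrw : 2*Δ/3 = L * ((2/3) * ((N:ℝ))⁻¹) := by
    rw [hΔ_def]; field_simp
  have hrpow1 : (2*Δ/3) ^ β = L ^ β * ((2/3) * ((N:ℝ))⁻¹) ^ β := by
    rw [hΔrw, Real.mul_rpow hL0.le (by positivity)]
  have hrpow2 : ((2/3 : ℝ) * ((N:ℝ))⁻¹) ^ β = (2/3:ℝ) ^ β * ((N:ℝ) ^ β)⁻¹ := by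
    rw [Real.mul_rpow (by norm_num) (by positivity), Real.inv_rpow hNpos.le]
  have h23 : (2/3:ℝ) ≤ (2/3:ℝ) ^ β := by
    have := Real.rpow_le_rpow_of_exponent_ge (x := (2/3:ℝ)) (by norm_num) (by norm_num) hβ1.le
    rwa [Real.rpow_one] at this
  have hNβpos : (0:ℝ) < (N:ℝ) ^ β := Real.rpow_pos_of_pos hNpos β
  have hLβpos : (0:ℝ) < L ^ β := Real.rpow_pos_of_pos hL0 β
  -- reduce: ((N:ℝ)-1) * (K/4) * L^β * (2/3)^β / N^β ≤ 2K L^β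
  rw [hrpow1, hrpow2] at hkey
  have h1 : ((N:ℝ)-1) * (K/4) * L^β * (2/3:ℝ)^β ≤ 2*K*L^β * (N:ℝ)^β := by
    have hmul := mul_le_mul_of_nonneg_right hkey hNβpos.le
    calc ((N:ℝ)-1) * (K/4) * L^β * (2/3:ℝ)^β
        = ((N:ℝ)-1) * (K/4 * (L ^ β * ((2/3:ℝ)^β * ((N:ℝ)^β)⁻¹))) * (N:ℝ)^β := by
          field_simp
      _ ≤ 2*K*L^β * (N:ℝ)^β := hmul
  have h2 : ((N:ℝ)-1) * (K/4) * L^β * (2/3:ℝ) ≤ 2*K*L^β * (N:ℝ)^β := by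
    refine le_trans ?_ h1
    have hpos : (0:ℝ) ≤ ((N:ℝ)-1) * (K/4) * L^β := by
      have : (0:ℝ) ≤ (N:ℝ)-1 := by linarith
      positivity
    exact mul_le_mul_of_nonneg_left h23 hpos
  have h3 : (N:ℝ)-1 ≤ 12 * (N:ℝ)^β := by
    nlinarith [h2, mul_pos hKpos hLβpos, mul_pos (mul_pos hKpos hLβpos) hNβpos]
  have hfin : (N:ℝ) / (N:ℝ) ^ β ≤ 24 := by
    rw [div_le_iff₀ hNβpos]
    linarith
  have hNrw : (N:ℝ) ^ (1-β) = (N:ℝ) / (N:ℝ) ^ β := by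
    rw [Real.rpow_sub hNpos, Real.rpow_one]
  rw [hNrw] at hN24
  linarith

/-- (Discontinuous velocity) Let `0 < β < 1` and suppose `υ⁺_β f` exists finitely
(with values `v`) on an interval around `x`, `υ⁺_β f(x) = K ≠ 0`, and `v` is
continuous at `x`. Then a contradiction follows — hence the set of change
`χ⁺_β(f) = {x : υ⁺_β f(x) ≠ 0}` contains no interval. -/
theorem discontinuous_velocity (f : ℝ → ℝ) (x β K : ℝ) (v : ℝ → ℝ)
    (hβ : 0 < β) (hβ1 : β < 1)
    (hvel : ∃ δ > (0:ℝ), ∀ y ∈ Ioo (x - δ) (x + δ),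
      Tendsto (fun ε : ℝ => (f (y + ε) - f y) / ε ^ β) (𝓝[>] 0) (𝓝 (v y)))
    (hK : v x = K) (hK0 : K ≠ 0)
    (hcont : ContinuousAt v x) :
    False := by
  rcases hK0.lt_or_gt with hneg | hpos
  · -- apply the auxiliary lemma to -f, -v, -K
    refine aux_discvel (fun t => -f t) x β (-K) (fun t => -v t) hβ hβ1 ?_ (by simp [hK]) (by linarith) hcont.neg
    obtain ⟨δ, hδ, hvel⟩ := hvel
    refine ⟨δ, hδ, fun y hy => ?_⟩
    have := (hvel y hy).neg
    convert this using 2 with ε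
    ring
  · exact aux_discvel f x β K v hβ hβ1 hvel hK hpos hcont
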